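/- Suppose μ has no atoms, μ(X) = ∞, and μ is doubling. For every x ∈ X and r > 0 there exists R > 0 such that B̃(x,r) ⊆ B(x,R) and μ(B(x,R)) ≤ C·μ(B̃(x,r)), where C depends only on the doubling constant. -/

import Mathlib

open MeasureTheory Metric

/-- If `μ` has no atoms, `μ(X) = ∞`, and `μ` is doubling, then every `d̃`-ball
`B̃(x,r)` is contained in a metric ball `B(x,R)` of comparable measure. -/
theorem dtilde_ball_inside_metric_ball
    {X : Type*} [MetricSpace X] [MeasurableSpace X] [BorelSpace X]
    (μ : Measure X)
    (hvol : ∀ (x : X) (r : ℝ), 0 < r → 0 < (μ (closedBall x r)).toReal)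
    (hna : ∀ x : X, μ {x} = 0)
    (hinf : μ Set.univ = ⊤)
    (C : ℝ) (hC : 0 < C)
    (hdouble : ∀ (x : X) (r : ℝ), 0 < r →
      (μ (closedBall x (2 * r))).toReal ≤ C * (μ (closedBall x r)).toReal)
    (dt : X → X → ℝ)
    (hdt : ∀ x y : X, dt x y =
      sInf {m : ℝ | ∃ (z : X) (r : ℝ), x ∈ closedBall z r ∧ y ∈ closedBall z r ∧
        m = (μ (closedBall z r)).toReal}) :
    ∃ C' > (0 : ℝ), ∀ (x : X) (r : ℝ), 0 < r → ∃ R > (0 : ℝ),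
      {y : X | dt x y ≤ r} ⊆ closedBall x R ∧
      (μ (closedBall x R)).toReal ≤ C' * (μ {y : X | dt x y ≤ r}).toReal := by
  -- basic facts
  have hfin : ∀ (z : X) (t : ℝ), 0 < t → μ (closedBall z t) ≠ ⊤ := by
    intro z t ht h
    have := hvol z t ht
    simp [h] at this
  refine ⟨C ^ 4, by positivity, ?_⟩
  intro x r hr
  set f : ℝ → ℝ := fun t => (μ (closedBall x t)).toReal with hfdef
  have hmono : ∀ t t' : ℝ, 0 < t' → t ≤ t' → f t ≤ f t' := fun t t' ht' h =>
    ENNReal.toReal_mono (hfin x t' ht') (measure_mono (closedBall_subset_closedBall h))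
  have hC1 : 1 ≤ C := by
    have h1 := hdouble x 1 one_pos
    have h2 : f 1 ≤ f (2 * 1) := hmono 1 (2 * 1) (by norm_num) (by norm_num)
    have h3 := hvol x 1 one_pos
    nlinarith
  -- small balls of measure ≤ r exist
  have hS : ∃ t : ℝ, 0 < t ∧ f t ≤ r := by
    have hanti : Antitone (fun n : ℕ => closedBall x (1 / (n + 1))) := by
      intro n m hnm
      apply closedBall_subset_closedBall
      apply one_div_le_one_div_of_le (by positivity)
      exact_mod_cast by exact_mod_cast add_le_add_left (Nat.cast_le.mpr hnm) 1
    have hint : (⋂ n : ℕ, closedBall x (1 / ((n : ℝ) + 1))) = {x} := by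
      ext y
      simp only [Set.mem_iInter, mem_closedBall, Set.mem_singleton_iff]
      constructor
      · intro h
        have hten : Filter.Tendsto (fun n : ℕ => 1 / ((n : ℝ) + 1)) Filter.atTop (nhds 0) :=
          tendsto_one_div_add_atTop_nhds_zero_nat
        have h0 : dist y x ≤ 0 := ge_of_tendsto hten (Filter.Eventually.of_forall h)
        have := dist_nonneg (x := y) (y := x)
        have : dist y x = 0 := le_antisymm h0 this
        exact dist_eq_zero.mp this
      · intro h
        subst h
        intro n
        simp only [dist_self]
        positivity
    have hten : Filter.Tendsto (fun n : ℕ => μ (closedBall x (1 / ((n : ℝ) + 1))))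
        Filter.atTop (nhds (μ {x})) := by
      have := tendsto_measure_iInter_atTop (μ := μ)
        (s := fun n : ℕ => closedBall x (1 / ((n : ℝ) + 1)))
        (fun n => (measurableSet_closedBall).nullMeasurableSet) hanti
        ⟨0, hfin x _ (by norm_num)⟩
      rwa [hint] at this
    rw [hna x] at hten
    have hev : ∀ᶠ n : ℕ in Filter.atTop,
        μ (closedBall x (1 / ((n : ℝ) + 1))) < ENNReal.ofReal r :=
      hten.eventually_lt_const (by simp [ENNReal.ofReal_pos, hr])
    obtain ⟨n, hn⟩ := hev.exists
    exact ⟨1 / ((n : ℝ) + 1), by positivity,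
      le_of_lt (ENNReal.toReal_lt_of_lt_ofReal hn)⟩
  -- big balls of measure > C * r exist
  have hT : ∃ t : ℝ, 0 < t ∧ C * r < f t := by
    have hmon : Monotone (fun n : ℕ => closedBall x (n : ℝ)) := fun n m hnm =>
      closedBall_subset_closedBall (by exact_mod_cast hnm)
    have huniv : (⋃ n : ℕ, closedBall x (n : ℝ)) = Set.univ := by
      ext y
      simp only [Set.mem_iUnion, mem_closedBall, Set.mem_univ, iff_true]
      obtain ⟨n, hn⟩ := exists_nat_ge (dist y x)
      exact ⟨n, hn⟩
    have hten : Filter.Tendsto (fun n : ℕ => μ (closedBall x (n : ℝ)))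
        Filter.atTop (nhds ⊤) := by
      have := tendsto_measure_iUnion_atTop (μ := μ) hmon
      rwa [huniv, hinf] at this
    have hev : ∀ᶠ n : ℕ in Filter.atTop,
        ENNReal.ofReal (C * r) < μ (closedBall x (n : ℝ)) :=
      hten.eventually_const_lt ENNReal.ofReal_lt_top
    obtain ⟨n, hn⟩ := (hev.and (Filter.eventually_ge_atTop 1)).exists
    refine ⟨(n : ℝ), by exact_mod_cast hn.2, ?_⟩
    have := (ENNReal.ofReal_lt_iff_lt_toReal (by positivity)
      (hfin x (n : ℝ) (by exact_mod_cast hn.2))).mp hn.1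
    exact this
  set S : Set ℝ := {t : ℝ | 0 < t ∧ f t ≤ r} with hSdef
  set T : Set ℝ := {t : ℝ | 0 < t ∧ C * r < f t} with hTdef
  have hSne : S.Nonempty := hS
  have hTne : T.Nonempty := hT
  have hST : ∀ s ∈ S, ∀ t ∈ T, s ≤ t := by
    intro s hs t ht
    by_contra h
    push_neg at h
    have h1 : f t ≤ f s := hmono t s hs.1 h.le
    have h2 : r ≤ C * r := le_mul_of_one_le_left hr.le hC1
    linarith [hs.2, ht.2]
  obtain ⟨tT, htT⟩ := hTne
  have hbddS : BddAbove S := ⟨tT, fun s hs => hST s hs tT htT⟩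
  set a : ℝ := sSup S with hadef
  have ha : 0 < a := by
    obtain ⟨s, hs⟩ := hSne
    exact lt_of_lt_of_le hs.1 (le_csSup hbddS hs)
  obtain ⟨t0, ht0S, ht0⟩ := exists_lt_of_lt_csSup hSne (half_lt_self ha)
  have hkey : ∀ t : ℝ, a < t → r < f t := by
    intro t hat
    by_contra h
    push_neg at h
    have : t ∈ S := ⟨lt_trans ha hat, h⟩
    exact absurd (le_csSup hbddS this) (not_le.mpr hat)
  -- r < C * f t0
  have hrt0 : r < C * f t0 := by
    have h1 : r < f (2 * t0) := hkey _ (by linarith)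
    have h2 := hdouble x t0 ht0S.1
    linarith
  set b : ℝ := sInf T with hbdef
  have hb : t0 ≤ b := le_csInf ⟨tT, htT⟩ (fun t ht => hST t0 ht0S t ht)
  have hbpos : 0 < b := lt_of_lt_of_le ht0S.1 hb
  obtain ⟨ρ, hρT, hρ⟩ := exists_lt_of_csInf_lt ⟨tT, htT⟩ (show b < 2 * b by linarith)
  have hρpos : 0 < ρ := hρT.1
  have hρhalf : f (ρ / 2) ≤ C * r := by
    by_contra h
    push_neg at h
    have : ρ / 2 ∈ T := ⟨by positivity, h⟩
    have := csInf_le ⟨0, fun t ht => ht.1.le⟩ this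
    linarith
  -- set of admissible m's is nonempty and bounded below by 0
  have hbdd0 : ∀ (y : X), BddBelow {m : ℝ | ∃ (z : X) (s : ℝ),
      x ∈ closedBall z s ∧ y ∈ closedBall z s ∧ m = (μ (closedBall z s)).toReal} := by
    intro y
    exact ⟨0, fun m hm => by obtain ⟨z, s, _, _, rfl⟩ := hm; exact ENNReal.toReal_nonneg⟩
  have hne0 : ∀ (y : X), ({m : ℝ | ∃ (z : X) (s : ℝ),
      x ∈ closedBall z s ∧ y ∈ closedBall z s ∧ m = (μ (closedBall z s)).toReal}).Nonempty := by
    intro y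
    exact ⟨(μ (closedBall x (dist x y))).toReal, x, dist x y,
      by simp [mem_closedBall, dist_self, dist_nonneg],
      by simp [mem_closedBall, dist_comm], rfl⟩
  refine ⟨2 * ρ, by positivity, ?_, ?_⟩
  -- containment
  · intro y hy
    simp only [Set.mem_setOf_eq] at hy
    by_contra hmem
    simp only [mem_closedBall, not_le] at hmem
    have hlow : f ρ / C ≤ dt x y := by
      rw [hdt x y]
      apply le_csInf (hne0 y)
      rintro m ⟨z, s, hxz, hyz, rfl⟩
      simp only [mem_closedBall] at hxz hyz
      have hs : ρ < s := by
        have := dist_triangle y z x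
        have hzx : dist z x ≤ s := by rwa [dist_comm] at hxz
        have hyx : dist y x ≤ 2 * s := by linarith [hyz, hzx, this]
        linarith
      have hspos : 0 < s := lt_trans hρpos hs
      have hsub : closedBall x ρ ⊆ closedBall z (2 * s) := by
        apply closedBall_subset_closedBall'
        have : dist x z ≤ s := hxz
        linarith
      have h1 : f ρ ≤ (μ (closedBall z (2 * s))).toReal :=
        ENNReal.toReal_mono (hfin z (2 * s) (by positivity)) (measure_mono hsub)
      have h2 := hdouble z s hspos
      rw [div_le_iff₀ hC]
      calc f ρ ≤ (μ (closedBall z (2 * s))).toReal := h1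
        _ ≤ C * (μ (closedBall z s)).toReal := h2
        _ = (μ (closedBall z s)).toReal * C := mul_comm _ _
    have hρbig : C * r < f ρ := hρT.2
    have : r < dt x y := by
      have : r < f ρ / C := (lt_div_iff₀ hC).mpr (by linarith)
      linarith
    linarith
  -- measure comparison
  · have hsub2 : closedBall x t0 ⊆ {y : X | dt x y ≤ r} := by
      intro y hy
      simp only [mem_closedBall] at hy
      simp only [Set.mem_setOf_eq]
      rw [hdt x y]
      refine le_trans (csInf_le (hbdd0 y) ?_) ht0S.2
      exact ⟨x, t0, by simp [mem_closedBall, dist_self, ht0S.1.le],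
        by simp [mem_closedBall, hy], rfl⟩
    have hsub3 : {y : X | dt x y ≤ r} ⊆ closedBall x (2 * ρ) := by
      intro y hy
      simp only [Set.mem_setOf_eq] at hy
      by_contra hmem
      simp only [mem_closedBall, not_le] at hmem
      have hlow : f ρ / C ≤ dt x y := by
        rw [hdt x y]
        apply le_csInf (hne0 y)
        rintro m ⟨z, s, hxz, hyz, rfl⟩
        simp only [mem_closedBall] at hxz hyz
        have hs : ρ < s := by
          have := dist_triangle y z x
          have hzx : dist z x ≤ s := by rwa [dist_comm] at hxz
          have hyx : dist y x ≤ 2 * s := by linarith [hyz, hzx, this]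
          linarith
        have hspos : 0 < s := lt_trans hρpos hs
        have hsub : closedBall x ρ ⊆ closedBall z (2 * s) := by
          apply closedBall_subset_closedBall'
          have : dist x z ≤ s := hxz
          linarith
        have h1 : f ρ ≤ (μ (closedBall z (2 * s))).toReal :=
          ENNReal.toReal_mono (hfin z (2 * s) (by positivity)) (measure_mono hsub)
        have h2 := hdouble z s hspos
        rw [div_le_iff₀ hC]
        calc f ρ ≤ (μ (closedBall z (2 * s))).toReal := h1
          _ ≤ C * (μ (closedBall z s)).toReal := h2
          _ = (μ (closedBall z s)).toReal * C := mul_comm _ _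
      have : r < f ρ / C := (lt_div_iff₀ hC).mpr (by linarith [hρT.2])
      linarith
    have hBfin : μ {y : X | dt x y ≤ r} ≠ ⊤ := by
      intro h
      have := measure_mono hsub3 (μ := μ)
      rw [h] at this
      exact hfin x (2 * ρ) (by positivity) (top_le_iff.mp this)
    have hBge : f t0 ≤ (μ {y : X | dt x y ≤ r}).toReal :=
      ENNReal.toReal_mono hBfin (measure_mono hsub2)
    -- chain
    have h1 : f (2 * ρ) ≤ C * f ρ := hdouble x ρ hρpos
    have h2 : f ρ ≤ C * f (ρ / 2) := by
      have := hdouble x (ρ / 2) (by positivity)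
      have heq : 2 * (ρ / 2) = ρ := by ring
      rwa [heq] at this
    have hfρhalf_nonneg : 0 ≤ f (ρ / 2) := ENNReal.toReal_nonneg
    have hft0_nonneg : 0 ≤ f t0 := ENNReal.toReal_nonneg
    have : f (2 * ρ) ≤ C ^ 4 * f t0 := by
      have e1 : f (2 * ρ) ≤ C * (C * f (ρ / 2)) :=
        le_trans h1 (mul_le_mul_of_nonneg_left h2 hC.le)
      have e2 : C * (C * f (ρ / 2)) ≤ C * (C * (C * r)) :=
        mul_le_mul_of_nonneg_left (mul_le_mul_of_nonneg_left hρhalf hC.le) hC.le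
      have e3 : C * (C * (C * r)) ≤ C * (C * (C * (C * f t0))) := by
        refine mul_le_mul_of_nonneg_left (mul_le_mul_of_nonneg_left
          (mul_le_mul_of_nonneg_left hrt0.le hC.le) hC.le) hC.le
      have e4 : C * (C * (C * (C * f t0))) = C ^ 4 * f t0 := by ring
      linarith
    calc (μ (closedBall x (2 * ρ))).toReal = f (2 * ρ) := rfl
      _ ≤ C ^ 4 * f t0 := this
      _ ≤ C ^ 4 * (μ {y : X | dt x y ≤ r}).toReal := by
          apply mul_le_mul_of_nonneg_left hBge (by positivity)
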